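/- Let Σ be a finite nonempty set, E a finite set, C : E → P(Σ) a map with C(e) nonempty for all e, and ω : E → ℝ. Define the coalitional game W : P(Σ) → ℝ by W(X) = Σ_{e : X ∩ C(e) ≠ ∅} ω(e). Then for every a ∈ Σ, the Shapley value SV_a(W) = Σ_{X ⊆ Σ, a ∈ X} ((|X|−1)!(|Σ|−|X|)!/|Σ|!)·(W(X) − W(X∖{a})) equals Σ_{e : a ∈ C(e)} ω(e)/|C(e)|. -/

import Mathlib

open Finset

lemma key (n c : ℕ) (hc : 0 < c) (hcn : c ≤ n) :
    ∑ j ∈ Finset.range (n - c + 1),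
      (((n - c).choose j : ℝ) * (j.factorial * (n - (j+1)).factorial) / n.factorial)
      = 1 / c := by
  set m := n - c with hm
  have hmn : m ≤ n := Nat.sub_le _ _
  have hnm : n - m = c := by omega
  set B : ℕ → ℝ := fun j => if j ≤ m then
      ((m.factorial * (n-j).factorial : ℕ) : ℝ) / ((m-j).factorial * n.factorial * c) else 0
    with hB
  have hstep : ∀ j ∈ Finset.range (m+1),
      ((m.choose j : ℝ) * (j.factorial * (n - (j+1)).factorial) / n.factorial)
      = B j - B (j+1) := by
    intro j hj
    simp only [Finset.mem_range] at hj
    have hjm : j ≤ m := by omega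
    have hfac : (m.choose j) * j.factorial * (m-j).factorial = m.factorial :=
      Nat.choose_mul_factorial_mul_factorial hjm
    have hnpos : (0:ℝ) < n.factorial := by positivity
    have hcpos : (0:ℝ) < c := by exact_mod_cast hc
    have h1 : B j = ((m.factorial * (n-j).factorial : ℕ) : ℝ) / ((m-j).factorial * n.factorial * c) := by
      simp [hB, hjm]
    rcases Nat.lt_or_ge j m with hlt | hge
    · -- j < m
      have h2 : B (j+1) = ((m.factorial * (n-(j+1)).factorial : ℕ) : ℝ) / ((m-(j+1)).factorial * n.factorial * c) := by
        simp only [hB]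
        rw [if_pos (by omega : j + 1 ≤ m)]
      obtain ⟨q, hq⟩ : ∃ q, m - j = q + 1 := ⟨m - j - 1, by omega⟩
      have hq2 : m - (j+1) = q := by omega
      have e1 : (n - j).factorial = (c + (q+1)) * (n - (j+1)).factorial := by
        have h : n - j = (n - (j+1)) + 1 := by omega
        rw [h, Nat.factorial_succ]
        congr 1
        omega
      have e2 : (m - j).factorial = (q+1) * q.factorial := by
        rw [hq, Nat.factorial_succ]
      have hqf : (0:ℝ) < (q.factorial : ℝ) := by positivity
      rw [h1, h2, hq2]
      push_cast [e1, e2, ← hfac, hq2]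
      field_simp
      ring
    · -- j = m
      have heq : j = m := le_antisymm hjm hge
      have h2 : B (j+1) = 0 := by simp [hB, heq]
      have hmj0 : m - j = 0 := by omega
      have hnjc : n - j = c := by omega
      have hnj1 : n - (j+1) = c - 1 := by omega
      have hchoose : m.choose j = 1 := by simp [heq]
      have hjf : j.factorial = m.factorial := by rw [heq]
      have hcf : c.factorial = c * (c-1).factorial := by
        obtain ⟨c', hc'⟩ : ∃ c', c = c' + 1 := ⟨c - 1, by omega⟩
        subst hc'
        simp [Nat.factorial_succ]
      rw [h1, h2, hmj0, hnjc, hnj1, hchoose, hjf, hcf]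
      push_cast
      field_simp
      ring
  rw [Finset.sum_congr rfl hstep, Finset.sum_range_sub']
  have hb0 : B 0 = ((m.factorial * n.factorial : ℕ) : ℝ) / (m.factorial * n.factorial * c) := by
    simp [hB]
  have hb1 : B (m+1) = 0 := by simp [hB]
  rw [hb0, hb1]
  have hmf : (0:ℝ) < (m.factorial : ℝ) := by positivity
  have hnf : (0:ℝ) < (n.factorial : ℝ) := by positivity
  push_cast
  field_simp
  ring

theorem stmt_1 {α E : Type*} [Fintype α] [DecidableEq α] [Fintype E]
    (hα : 0 < Fintype.card α)
    (C : E → Finset α) (hC : ∀ e, (C e).Nonempty) (ω : E → ℝ)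
    (W : Finset α → ℝ)
    (hW : ∀ X : Finset α, W X = ∑ e ∈ univ.filter (fun e => (X ∩ C e).Nonempty), ω e)
    (a : α) :
    ∑ X ∈ univ.powerset.filter (fun X => a ∈ X),
      (((X.card - 1).factorial * (Fintype.card α - X.card).factorial : ℝ) /
        (Fintype.card α).factorial) * (W X - W (X.erase a)) =
    ∑ e ∈ univ.filter (fun e => a ∈ C e), ω e / (C e).card := by
  classical
  set n := Fintype.card α with hn
  set p : Finset α → ℝ := fun X =>
    (((X.card - 1).factorial * (n - X.card).factorial : ℝ) / n.factorial) with hp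
  set A := univ.powerset.filter (fun X => a ∈ X) with hA
  -- Step A : marginal contribution
  have hdiff : ∀ X : Finset α, a ∈ X →
      W X - W (X.erase a)
        = ∑ e ∈ univ.filter (fun e => a ∈ C e ∧ X.erase a ∩ C e = ∅), ω e := by
    intro X haX
    rw [hW, hW]
    have hsub : univ.filter (fun e => ((X.erase a) ∩ C e).Nonempty)
        ⊆ univ.filter (fun e => (X ∩ C e).Nonempty) := by
      intro e he
      simp only [mem_filter, mem_univ, true_and] at he ⊢
      exact he.mono (inter_subset_inter (erase_subset a X) le_rfl)
    rw [← Finset.sum_sdiff_eq_sub hsub]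
    apply Finset.sum_congr _ (fun _ _ => rfl)
    ext e
    simp only [mem_sdiff, mem_filter, mem_univ, true_and]
    constructor
    · rintro ⟨⟨b, hb⟩, h2⟩
      rw [not_nonempty_iff_eq_empty] at h2
      refine ⟨?_, h2⟩
      simp only [mem_inter] at hb
      by_cases hba : b = a
      · exact hba ▸ hb.2
      · exfalso
        have : b ∈ X.erase a ∩ C e := by
          simp [Finset.mem_erase, hba, hb.1, hb.2]
        rw [h2] at this
        exact absurd this (notMem_empty b)
    · rintro ⟨h1, h2⟩
      exact ⟨⟨a, mem_inter.mpr ⟨haX, h1⟩⟩, by simp [h2]⟩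
  -- Step C+D : inner sum over coalitions equals 1 / |C e|
  have key2 : ∀ e, a ∈ C e →
      ∑ X ∈ A.filter (fun X => X.erase a ∩ C e = ∅), p X = 1 / ((C e).card : ℝ) := by
    intro e hae
    have hcard : (C e) ⊆ univ := subset_univ _
    have hcle : (C e).card ≤ n := by rw [hn]; exact card_le_univ _
    have hcpos : 0 < (C e).card := card_pos.mpr (hC e)
    have hm : (univ \ C e).card = n - (C e).card := by
      rw [card_sdiff_of_subset hcard, card_univ]
    have step1 : ∑ X ∈ A.filter (fun X => X.erase a ∩ C e = ∅), p X
        = ∑ Y ∈ (univ \ C e).powerset,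
            ((Y.card.factorial * (n - (Y.card + 1)).factorial : ℝ) / n.factorial) := by
      refine Finset.sum_bij' (fun X _ => X.erase a) (fun Y _ => insert a Y) ?_ ?_ ?_ ?_ ?_
      · intro X hX
        simp only [hA, mem_filter, mem_powerset] at hX
        simp only [mem_powerset]
        intro b hb
        simp only [mem_sdiff, mem_univ, true_and]
        intro hbC
        have hmem : b ∈ X.erase a ∩ C e := mem_inter.mpr ⟨hb, hbC⟩
        rw [hX.2] at hmem
        exact absurd hmem (notMem_empty b)
      · intro Y hY
        simp only [mem_powerset] at hY
        have haY : a ∉ Y := fun h => by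
          have h2 := hY h
          simp only [mem_sdiff, mem_univ, true_and] at h2
          exact h2 hae
        simp only [hA, mem_filter, mem_powerset]
        refine ⟨⟨subset_univ _, mem_insert_self a Y⟩, ?_⟩
        rw [Finset.erase_insert haY, eq_empty_iff_forall_notMem]
        intro b hb
        simp only [mem_inter] at hb
        have h2 := hY hb.1
        simp only [mem_sdiff, mem_univ, true_and] at h2
        exact h2 hb.2
      · intro X hX
        simp only [hA, mem_filter, mem_powerset] at hX
        exact Finset.insert_erase hX.1.2
      · intro Y hY
        simp only [mem_powerset] at hY
        have haY : a ∉ Y := fun h => by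
          have h2 := hY h
          simp only [mem_sdiff, mem_univ, true_and] at h2
          exact h2 hae
        exact Finset.erase_insert haY
      · intro X hX
        simp only [hA, mem_filter, mem_powerset] at hX
        have hpos : 0 < X.card := card_pos.mpr ⟨a, hX.1.2⟩
        have hcX : (X.erase a).card = X.card - 1 := Finset.card_erase_of_mem hX.1.2
        simp only [hp, hcX]
        have h1 : X.card - 1 + 1 = X.card := by omega
        rw [h1]
    rw [step1, Finset.sum_powerset, hm]
    have step2 : ∀ j ∈ Finset.range (n - (C e).card + 1),
        ∑ Y ∈ Finset.powersetCard j (univ \ C e),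
            ((Y.card.factorial * (n - (Y.card + 1)).factorial : ℝ) / n.factorial)
        = ((n - (C e).card).choose j : ℝ)
            * (j.factorial * (n - (j+1)).factorial) / n.factorial := by
      intro j _
      have : ∀ Y ∈ Finset.powersetCard j (univ \ C e),
          ((Y.card.factorial * (n - (Y.card + 1)).factorial : ℝ) / n.factorial)
          = ((j.factorial * (n - (j + 1)).factorial : ℝ) / n.factorial) := by
        intro Y hY
        rw [(Finset.mem_powersetCard.mp hY).2]
      rw [Finset.sum_congr rfl this, Finset.sum_const, Finset.card_powersetCard, hm,
        nsmul_eq_mul]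
      ring
    rw [Finset.sum_congr rfl step2]
    exact key n (C e).card hcpos hcle
  -- assemble
  calc ∑ X ∈ A, p X * (W X - W (X.erase a))
      = ∑ X ∈ A, ∑ e ∈ (univ : Finset E),
          (if a ∈ C e ∧ X.erase a ∩ C e = ∅ then p X * ω e else 0) := by
        apply Finset.sum_congr rfl
        intro X hX
        have haX : a ∈ X := (mem_filter.mp hX).2
        rw [hdiff X haX, Finset.mul_sum, Finset.sum_filter]
    _ = ∑ e ∈ (univ : Finset E), ∑ X ∈ A,
          (if a ∈ C e ∧ X.erase a ∩ C e = ∅ then p X * ω e else 0) := Finset.sum_comm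
    _ = ∑ e ∈ (univ : Finset E), (if a ∈ C e then ω e / (C e).card else 0) := by
        apply Finset.sum_congr rfl
        intro e _
        by_cases hae : a ∈ C e
        · simp only [hae, true_and, if_true]
          rw [← Finset.sum_filter, ← Finset.sum_mul, key2 e hae]
          ring
        · simp [hae]
    _ = ∑ e ∈ univ.filter (fun e => a ∈ C e), ω e / (C e).card :=
        (Finset.sum_filter _ _).symm
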